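/- arXiv:1401.2819 — 5 statements merged into one kernel-verified Lean document; each statement's English description precedes it below -/
import Mathlib

section
/- For any finite simple graph G, the sum over all vertices of the curvature K(x) = Σ_{k≥0} (-1)^k V_{k-1}(x)/(k+1) equals the Euler characteristic χ(G) = Σ_{k≥0} (-1)^k v_k, where v_k is the number of complete subgraphs K_{k+1} of G (Gauss–Bonnet–Chern theorem for graphs). -/
-- The number of cliques with `m` vertices of `G` that are contained in the
-- vertex set `A` (for `m = 0` this is `1`, counting the empty clique).
open Classical in
noncomputable def numCliquesIn {V : Type*} [Fintype V] (G : SimpleGraph V) (A : Finset V)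
    (m : ℕ) : ℕ :=
  (Finset.univ.powerset.filter (fun s : Finset V => s.card = m ∧ s ⊆ A ∧ G.IsClique ↑s)).card

-- The curvature `K(x) = ∑_{k ≥ 0} (-1)^k V_{k-1}(x) / (k+1)`, where `V_{k-1}(x)` is the
-- number of `K_k` subgraphs of the unit sphere `S(x)` and `V_{-1}(x) = 1`.
open Classical in
noncomputable def curvature {V : Type*} [Fintype V] (G : SimpleGraph V) (x : V) : ℚ :=
  ∑ k ∈ Finset.range (Fintype.card V + 1),
    (-1 : ℚ) ^ k * (numCliquesIn G (Finset.univ.filter (fun y => G.Adj x y)) k : ℚ) / (k + 1)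

open Finset Classical in
lemma sum_numCliques {V : Type*} [Fintype V] (G : SimpleGraph V) (k : ℕ) :
    ∑ x : V, numCliquesIn G (Finset.univ.filter (fun y => G.Adj x y)) k
      = (k + 1) * numCliquesIn G Finset.univ (k + 1) := by
  classical
  unfold numCliquesIn
  rw [← Finset.card_sigma]
  set T := Finset.univ.powerset.filter
      (fun s : Finset V => s.card = k + 1 ∧ s ⊆ Finset.univ ∧ G.IsClique ↑s) with hT
  have hRHS : (k + 1) * T.card = (T.sigma (fun t => t)).card := by
    rw [Finset.card_sigma]
    rw [Finset.sum_congr rfl (fun t ht => ((Finset.mem_filter.mp ht).2.1)),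
      Finset.sum_const, smul_eq_mul, mul_comm]
  rw [hRHS]
  apply Finset.card_bij (fun a _ => (⟨insert a.1 a.2, a.1⟩ : Σ _ : Finset V, V))
  · rintro ⟨x, s⟩ ha
    rw [Finset.mem_sigma] at ha
    obtain ⟨-, hs⟩ := ha
    rw [Finset.mem_filter] at hs
    obtain ⟨-, hcard, hsub, hcl⟩ := hs
    have hadj : ∀ y ∈ s, G.Adj x y := by
      intro y hy
      have := hsub hy
      simp at this
      exact this
    have hxs : x ∉ s := fun h => G.irrefl (hadj x h)
    rw [Finset.mem_sigma, hT, Finset.mem_filter]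
    refine ⟨⟨Finset.mem_powerset.mpr (Finset.subset_univ _),
      by rw [Finset.card_insert_of_notMem hxs, hcard],
      Finset.subset_univ _, ?_⟩, Finset.mem_insert_self _ _⟩
    rw [Finset.coe_insert]
    exact hcl.insert (fun y hy _ => hadj y hy)
  · rintro ⟨x, s⟩ ha ⟨x', s'⟩ ha' h
    rw [Finset.mem_sigma, Finset.mem_filter] at ha ha'
    have hadj : ∀ y ∈ s, G.Adj x y := by
      intro y hy
      have := ha.2.2.2.1 hy
      simp at this
      exact this
    have hadj' : ∀ y ∈ s', G.Adj x' y := by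
      intro y hy
      have := ha'.2.2.2.1 hy
      simp at this
      exact this
    have hxs : x ∉ s := fun hm => G.irrefl (hadj x hm)
    have hxs' : x' ∉ s' := fun hm => G.irrefl (hadj' x' hm)
    obtain ⟨h1, h2⟩ := Sigma.mk.inj_iff.mp h
    have hx : x = x' := eq_of_heq h2
    subst hx
    have : s = s' := by
      have := congrArg (fun t => Finset.erase t x) h1
      simpa [Finset.erase_insert hxs, Finset.erase_insert hxs'] using this
    simp [this]
  · rintro ⟨t, x⟩ hb
    rw [Finset.mem_sigma, hT, Finset.mem_filter] at hb
    obtain ⟨⟨-, hcard, -, hcl⟩, hx⟩ := hb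
    refine ⟨⟨x, t.erase x⟩, ?_, ?_⟩
    · rw [Finset.mem_sigma, Finset.mem_filter]
      refine ⟨Finset.mem_univ _, Finset.mem_powerset.mpr (Finset.subset_univ _),
        by rw [Finset.card_erase_of_mem hx, hcard]; rfl, ?_, ?_⟩
      · intro y hy
        rw [Finset.mem_erase] at hy
        rw [Finset.mem_filter]
        exact ⟨Finset.mem_univ _, (hcl (by exact hx) (by exact hy.2) (Ne.symm hy.1))⟩
      · exact hcl.subset (by simp [Finset.coe_erase, Set.diff_subset])
    · simp [Finset.insert_erase hx]

/-- Gauss–Bonnet–Chern for graphs: the total curvature equals the Euler characteristic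
`χ(G) = ∑_k (-1)^k v_k`, where `v_k` is the number of `K_{k+1}` subgraphs of `G`. -/
theorem gaussBonnet {V : Type*} [Fintype V] (G : SimpleGraph V) :
    ∑ x : V, curvature G x =
      ∑ k ∈ Finset.range (Fintype.card V),
        (-1 : ℚ) ^ k * (numCliquesIn G Finset.univ (k + 1) : ℚ) := by
  classical
  unfold curvature
  rw [Finset.sum_comm]
  have hterm : ∀ k ∈ Finset.range (Fintype.card V + 1),
      (∑ x : V, (-1 : ℚ) ^ k *
          (numCliquesIn G (Finset.univ.filter (fun y => G.Adj x y)) k : ℚ) / (k + 1))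
        = (-1 : ℚ) ^ k * (numCliquesIn G Finset.univ (k + 1) : ℚ) := by
    intro k _
    have hk : ((k : ℚ) + 1) ≠ 0 := by positivity
    rw [← Finset.sum_div, ← Finset.mul_sum, ← Nat.cast_sum, sum_numCliques]
    push_cast
    field_simp
  rw [Finset.sum_congr rfl hterm, Finset.sum_range_succ]
  have hzero : numCliquesIn G Finset.univ (Fintype.card V + 1) = 0 := by
    unfold numCliquesIn
    rw [Finset.card_eq_zero, Finset.filter_eq_empty_iff]
    intro s hs
    rw [Finset.mem_powerset] at hs
    rintro ⟨hc, -, -⟩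
    have := Finset.card_le_card hs
    rw [hc, Finset.card_univ] at this
    omega
  simp [hzero]
end

section
/- For any finite simple graph G and any injective real-valued function f on the vertex set, the sum over all vertices of the Poincaré–Hopf index i_f(x) = 1 − χ(S⁻(x)) equals the Euler characteristic χ(G), where S⁻(x) is the induced subgraph on neighbors y of x with f(y) < f(x). -/
-- The Euler characteristic `χ = ∑_k (-1)^k v_k` of the subgraph of `G` induced on `A`,
-- written as a sum over the nonempty cliques `s` contained in `A` of `(-1)^(dim s)`.
open Classical in
noncomputable def chi {V : Type*} [Fintype V] (G : SimpleGraph V) (A : Finset V) : ℤ :=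
  ∑ s ∈ Finset.univ.powerset.filter
      (fun s : Finset V => s.Nonempty ∧ s ⊆ A ∧ G.IsClique ↑s),
    (-1 : ℤ) ^ (s.card + 1)

open Classical in
noncomputable def phKey {V : Type*} [Nonempty V] (f : V → ℝ) (s : Finset V) : V :=
  if h : s.Nonempty then (Finset.exists_max_image s f h).choose else Classical.arbitrary V

lemma phKey_spec {V : Type*} [Nonempty V] (f : V → ℝ) {s : Finset V} (h : s.Nonempty) :
    phKey f s ∈ s ∧ ∀ y ∈ s, f y ≤ f (phKey f s) := by
  rw [phKey, dif_pos h]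
  exact ⟨(Finset.exists_max_image s f h).choose_spec.1,
    (Finset.exists_max_image s f h).choose_spec.2⟩

lemma phKey_eq {V : Type*} [Nonempty V] {f : V → ℝ} (hf : Function.Injective f)
    {s : Finset V} {x : V} (hx : x ∈ s) (hmax : ∀ y ∈ s, f y ≤ f x) :
    phKey f s = x := by
  have h : s.Nonempty := ⟨x, hx⟩
  obtain ⟨hmem, hm⟩ := phKey_spec f (s := s) h
  exact hf (le_antisymm (hmax _ hmem) (hm _ hx))

-- Poincaré–Hopf for graphs: for any injective function `f : V → ℝ`, the sum of the
-- indices `i_f(x) = 1 - χ(S⁻(x))` over all vertices equals `χ(G)`, where `S⁻(x)` is the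
-- subgraph induced on the neighbors `y` of `x` with `f y < f x`.
open Classical in
theorem poincareHopf {V : Type*} [Fintype V] (G : SimpleGraph V) (f : V → ℝ)
    (hf : Function.Injective f) :
    ∑ x : V, (1 - chi G (Finset.univ.filter (fun y => G.Adj x y ∧ f y < f x))) =
      chi G Finset.univ := by
  cases isEmpty_or_nonempty V with
  | inl hE =>
      simp [chi, Finset.eq_empty_of_isEmpty (Finset.univ : Finset V),
        Finset.filter_singleton]
  | inr hN =>
      set A : V → Finset V := fun x => Finset.univ.filter (fun y => G.Adj x y ∧ f y < f x)
        with hA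
      conv_rhs => rw [chi]
      rw [← Finset.sum_fiberwise_of_maps_to (t := (Finset.univ : Finset V))
        (g := phKey f) (fun s _ => Finset.mem_univ _)
        (fun s => (-1 : ℤ) ^ (s.card + 1))]
      refine Finset.sum_congr rfl (fun x _ => ?_)
      -- inner sum over cliques whose max is x equals 1 - chi G (A x)
      have hstep : ∑ s ∈ (Finset.univ.powerset.filter
            (fun s : Finset V => s.Nonempty ∧ s ⊆ Finset.univ ∧ G.IsClique ↑s)).filter
            (fun s => phKey f s = x), (-1 : ℤ) ^ (s.card + 1)
          = ∑ t ∈ Finset.univ.powerset.filter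
            (fun t : Finset V => t ⊆ A x ∧ G.IsClique ↑t), (-1 : ℤ) ^ t.card := by
        refine Finset.sum_nbij' (fun s => s.erase x) (fun t => insert x t) ?_ ?_ ?_ ?_ ?_
        · intro s hs
          simp only [Finset.mem_filter, Finset.mem_powerset] at hs ⊢
          obtain ⟨⟨-, hne, -, hcl⟩, hkey⟩ := hs
          obtain ⟨hxmem, hxmax⟩ := phKey_spec f hne
          rw [hkey] at hxmem hxmax
          refine ⟨Finset.subset_univ _, ?_, hcl.subset (by simp [Finset.erase_subset])⟩
          intro y hy
          have hyx : y ≠ x := (Finset.mem_erase.mp hy).1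
          have hys : y ∈ s := (Finset.mem_erase.mp hy).2
          simp only [hA, Finset.mem_filter, Finset.mem_univ, true_and]
          refine ⟨hcl hxmem hys (Ne.symm hyx), lt_of_le_of_ne (hxmax y hys) ?_⟩
          exact fun h => hyx (hf h)
        · intro t ht
          simp only [Finset.mem_filter, Finset.mem_powerset] at ht ⊢
          obtain ⟨-, hsub, hcl⟩ := ht
          have hadj : ∀ y ∈ t, G.Adj x y ∧ f y < f x := by
            intro y hy
            have := hsub hy
            simp only [hA, Finset.mem_filter, Finset.mem_univ, true_and] at this
            exact this
          have hcl' : G.IsClique ↑(insert x t) := by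
            rw [Finset.coe_insert]
            exact hcl.insert (fun b hb _ => (hadj b hb).1)
          refine ⟨⟨Finset.subset_univ _, ⟨x, Finset.mem_insert_self x t⟩,
            Finset.subset_univ _, hcl'⟩, ?_⟩
          refine phKey_eq hf (Finset.mem_insert_self x t) ?_
          intro y hy
          rcases Finset.mem_insert.mp hy with h | h
          · exact h ▸ le_refl _
          · exact le_of_lt (hadj y h).2
        · intro s hs
          simp only [Finset.mem_filter, Finset.mem_powerset] at hs
          obtain ⟨⟨-, hne, -, -⟩, hkey⟩ := hs
          obtain ⟨hxmem, -⟩ := phKey_spec f hne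
          rw [hkey] at hxmem
          exact Finset.insert_erase hxmem
        · intro t ht
          simp only [Finset.mem_filter, Finset.mem_powerset] at ht
          obtain ⟨-, hsub, -⟩ := ht
          have hx : x ∉ t := by
            intro hx
            have := hsub hx
            simp only [hA, Finset.mem_filter, Finset.mem_univ, true_and] at this
            exact G.irrefl this.1
          exact Finset.erase_insert hx
        · intro s hs
          simp only [Finset.mem_filter, Finset.mem_powerset] at hs
          obtain ⟨⟨-, hne, -, -⟩, hkey⟩ := hs
          obtain ⟨hxmem, -⟩ := phKey_spec f hne
          rw [hkey] at hxmem
          have : (s.erase x).card + 1 = s.card := Finset.card_erase_add_one hxmem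
          rw [← this]
          ring
      rw [hstep]
      -- now evaluate the right-hand side: it is `1 - chi G (A x)`
      have hsplit : Finset.univ.powerset.filter
            (fun t : Finset V => t ⊆ A x ∧ G.IsClique ↑t)
          = insert ∅ (Finset.univ.powerset.filter
            (fun t : Finset V => t.Nonempty ∧ t ⊆ A x ∧ G.IsClique ↑t)) := by
        ext t
        simp only [Finset.mem_filter, Finset.mem_powerset, Finset.mem_insert]
        constructor
        · rintro ⟨h1, h2, h3⟩
          rcases t.eq_empty_or_nonempty with h | h
          · exact Or.inl h
          · exact Or.inr ⟨h1, h, h2, h3⟩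
        · rintro (rfl | ⟨h1, -, h2, h3⟩)
          · simp [SimpleGraph.isClique_empty]
          · exact ⟨h1, h2, h3⟩
      rw [hsplit, Finset.sum_insert (by simp), chi]
      have : ∑ t ∈ Finset.univ.powerset.filter
            (fun t : Finset V => t.Nonempty ∧ t ⊆ A x ∧ G.IsClique ↑t), (-1 : ℤ) ^ t.card
          = - ∑ t ∈ Finset.univ.powerset.filter
            (fun t : Finset V => t.Nonempty ∧ t ⊆ A x ∧ G.IsClique ↑t),
            (-1 : ℤ) ^ (t.card + 1) := by
        rw [← Finset.sum_neg_distrib]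
        exact Finset.sum_congr rfl (fun t _ => by ring)
      simp only [Finset.card_empty, pow_zero, this]
      ring
end

section
/- If a graph G' is obtained from a finite simple graph G by a cone (pyramid) extension over a subgraph whose Euler characteristic is 1 (e.g., any contractible subgraph), then χ(G') = χ(G). -/
-- The cone (pyramid) extension of `G` over the induced subgraph on the vertex set `W`:
-- a new vertex (`none`) is joined to every vertex of `W`, and the old graph is kept.
def coneExt {V : Type*} (G : SimpleGraph V) (W : Finset V) : SimpleGraph (Option V) :=
  SimpleGraph.fromRel (fun a b =>
    match a, b with
    | some x, some y => G.Adj x y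
    | none, some x => x ∈ W
    | _, _ => False)

section aux
variable {V : Type*} (G : SimpleGraph V) (W : Finset V)

lemma coneExt_adj_some_some (x y : V) :
    (coneExt G W).Adj (some x) (some y) ↔ G.Adj x y := by
  simp only [coneExt, SimpleGraph.fromRel_adj, ne_eq, Option.some.injEq]
  constructor
  · rintro ⟨h, h1 | h1⟩
    · exact h1
    · exact h1.symm
  · intro h
    exact ⟨h.ne, Or.inl h⟩

lemma coneExt_adj_none_some (x : V) :
    (coneExt G W).Adj none (some x) ↔ x ∈ W := by
  simp [coneExt, SimpleGraph.fromRel_adj]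

lemma coneExt_adj_some_none (x : V) :
    (coneExt G W).Adj (some x) none ↔ x ∈ W := by
  rw [SimpleGraph.adj_comm]
  exact coneExt_adj_none_some G W x

open Classical in
lemma isClique_image_some (s : Finset V) :
    (coneExt G W).IsClique ↑(s.image some) ↔ G.IsClique ↑s := by
  constructor
  · intro h x hx y hy hxy
    have hx' : (some x) ∈ (↑(s.image some) : Set (Option V)) := by
      rw [Finset.coe_image]; exact Set.mem_image_of_mem _ hx
    have hy' : (some y) ∈ (↑(s.image some) : Set (Option V)) := by
      rw [Finset.coe_image]; exact Set.mem_image_of_mem _ hy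
    rw [← coneExt_adj_some_some G W]
    exact h hx' hy' (fun he => hxy (Option.some_injective V he))
  · intro h a ha b hb hab
    rw [Finset.coe_image] at ha hb
    obtain ⟨x, hx, rfl⟩ := ha
    obtain ⟨y, hy, rfl⟩ := hb
    rw [coneExt_adj_some_some]
    exact h hx hy (fun he => hab (congrArg some he))

open Classical in
lemma isClique_insert_none (s : Finset V) :
    (coneExt G W).IsClique ↑(insert none (s.image some)) ↔
      (G.IsClique ↑s ∧ s ⊆ W) := by
  constructor
  · intro h
    refine ⟨(isClique_image_some G W s).1 (h.subset ?_), ?_⟩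
    · rw [Finset.coe_subset]; exact Finset.subset_insert _ _
    · intro x hx
      rw [← coneExt_adj_none_some G W]
      refine h ?_ ?_ (by simp)
      · simp
      · rw [Finset.coe_insert]
        right
        rw [Finset.coe_image]
        exact Set.mem_image_of_mem _ hx
  · rintro ⟨hc, hsub⟩
    intro a ha b hb hab
    rw [Finset.coe_insert, Set.mem_insert_iff, Finset.coe_image] at ha hb
    match a, ha, b, hb with
    | none, _, none, _ => exact absurd rfl hab
    | none, _, some y, hb =>
        obtain ⟨y, hy, hye⟩ := hb.resolve_left (by simp)
        obtain rfl := Option.some_injective V hye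
        exact (coneExt_adj_none_some G W y).2 (hsub hy)
    | some x, ha, none, _ =>
        obtain ⟨x, hx, hxe⟩ := ha.resolve_left (by simp)
        obtain rfl := Option.some_injective V hxe
        exact (coneExt_adj_some_none G W x).2 (hsub hx)
    | some x, ha, some y, hb =>
        obtain ⟨x, hx, hxe⟩ := ha.resolve_left (by simp)
        obtain rfl := Option.some_injective V hxe
        obtain ⟨y, hy, hye⟩ := hb.resolve_left (by simp)
        obtain rfl := Option.some_injective V hye
        exact (coneExt_adj_some_some G W x y).2
          (hc hx hy (fun he => hab (congrArg some he)))

end aux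

section parts
variable {V : Type*} [Fintype V] (G : SimpleGraph V) (W : Finset V)

open Classical Finset in
/-- The sum over cliques not containing the cone point equals `χ(G)`. -/
lemma part_old (S : Finset (Finset (Option V)))
    (hmem : ∀ t, t ∈ S ↔ (none ∉ t ∧ t.Nonempty ∧ (coneExt G W).IsClique ↑t)) :
    (∑ t ∈ S, (-1 : ℤ) ^ (t.card + 1)) = chi G Finset.univ := by
  classical
  rw [chi]
  refine (Finset.sum_bij (fun s _ => s.image some) ?_ ?_ ?_ ?_).symm
  · intro s hs
    simp only [Finset.mem_filter, Finset.mem_powerset] at hs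
    obtain ⟨-, hne, -, hc⟩ := hs
    rw [hmem]
    exact ⟨by simp, hne.image _, (isClique_image_some G W s).2 hc⟩
  · intro a _ b _ h
    exact Finset.image_injective (Option.some_injective V) h
  · intro t ht
    rw [hmem] at ht
    obtain ⟨hnone, htne, htc⟩ := ht
    refine ⟨t.preimage some (Option.some_injective V).injOn, ?_, ?_⟩
    · have himg : (t.preimage some (Option.some_injective V).injOn).image some = t := by
        ext a
        simp only [Finset.mem_image, Finset.mem_preimage]
        constructor
        · rintro ⟨x, hx, rfl⟩; exact hx
        · intro ha
          match a with
          | none => exact absurd ha hnone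
          | some x => exact ⟨x, ha, rfl⟩
      simp only [Finset.mem_filter, Finset.mem_powerset]
      refine ⟨Finset.subset_univ _, ?_, Finset.subset_univ _, ?_⟩
      · obtain ⟨a, ha⟩ := htne
        match a with
        | none => exact absurd ha hnone
        | some x => exact ⟨x, by simpa using ha⟩
      · rw [← isClique_image_some G W, himg]; exact htc
    · ext a
      simp only [Finset.mem_image, Finset.mem_preimage]
      constructor
      · rintro ⟨x, hx, rfl⟩; exact hx
      · intro ha
        match a with
        | none => exact absurd ha hnone
        | some x => exact ⟨x, ha, rfl⟩
  · intro s hs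
    rw [Finset.card_image_of_injective _ (Option.some_injective V)]

open Classical Finset in
/-- The sum over cliques containing the cone point is `1 - χ(H)`, which vanishes. -/
lemma part_cone (hW : chi G W = 1) (S : Finset (Finset (Option V)))
    (hmem : ∀ t, t ∈ S ↔ (none ∈ t ∧ t.Nonempty ∧ (coneExt G W).IsClique ↑t)) :
    (∑ t ∈ S, (-1 : ℤ) ^ (t.card + 1)) = 0 := by
  classical
  set T : Finset (Finset V) := Finset.univ.powerset.filter
      (fun s : Finset V => s ⊆ W ∧ G.IsClique ↑s) with hT
  have key : (∑ t ∈ S, (-1 : ℤ) ^ (t.card + 1)) = ∑ s ∈ T, (-1 : ℤ) ^ s.card := by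
    refine Finset.sum_bij (fun t _ => (t.erase none).preimage some
      (Option.some_injective V).injOn) ?_ ?_ ?_ ?_
    · intro t ht
      rw [hmem] at ht
      obtain ⟨hnone, -, htc⟩ := ht
      set s := (t.erase none).preimage some (Option.some_injective V).injOn with hs
      have himg : s.image some = t.erase none := by
        ext a
        simp only [hs, Finset.mem_image, Finset.mem_preimage]
        constructor
        · rintro ⟨x, hx, rfl⟩; exact hx
        · intro ha
          match a with
          | none => exact absurd ha (Finset.notMem_erase _ _)
          | some x => exact ⟨x, ha, rfl⟩
      have htins : t = insert none (s.image some) := by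
        rw [himg, Finset.insert_erase hnone]
      have h2 := (isClique_insert_none G W s).1 (htins ▸ htc)
      simp only [hT, Finset.mem_filter, Finset.mem_powerset]
      exact ⟨Finset.subset_univ _, h2.2, h2.1⟩
    · intro a ha b hb h
      rw [hmem] at ha hb
      have ha' := ha.1; have hb' := hb.1
      have hab : a.erase none = b.erase none := by
        ext x
        match x with
        | none => simp
        | some y =>
          have := Finset.ext_iff.1 h y
          simpa using this
      have := congrArg (insert none) hab
      rwa [Finset.insert_erase ha', Finset.insert_erase hb'] at this
    · intro s hs
      simp only [hT, Finset.mem_filter, Finset.mem_powerset] at hs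
      obtain ⟨-, hsub, hc⟩ := hs
      refine ⟨insert none (s.image some), ?_, ?_⟩
      · rw [hmem]
        exact ⟨Finset.mem_insert_self _ _, ⟨none, Finset.mem_insert_self _ _⟩,
          (isClique_insert_none G W s).2 ⟨hc, hsub⟩⟩
      · ext x
        simp [Finset.mem_preimage]
    · intro t ht
      rw [hmem] at ht
      have hnone := ht.1
      set s := (t.erase none).preimage some (Option.some_injective V).injOn with hs
      have himg : s.image some = t.erase none := by
        ext a
        simp only [hs, Finset.mem_image, Finset.mem_preimage]
        constructor
        · rintro ⟨x, hx, rfl⟩; exact hx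
        · intro ha
          match a with
          | none => exact absurd ha (Finset.notMem_erase _ _)
          | some x => exact ⟨x, ha, rfl⟩
      have h1 : (s.image some).card = s.card :=
        Finset.card_image_of_injective _ (Option.some_injective V)
      have h12 : (t.erase none).card = s.card := by rw [← himg, h1]
      have h2 : (t.erase none).card = t.card - 1 := Finset.card_erase_of_mem hnone
      have h3 : 1 ≤ t.card := Finset.card_pos.2 ⟨none, hnone⟩
      have hcard : t.card = s.card + 1 := by omega
      rw [hcard]
      ring
  rw [key]
  have hTsplit : (∑ s ∈ T, (-1 : ℤ) ^ s.card) =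
      (∑ s ∈ T.filter (fun s => s.Nonempty), (-1 : ℤ) ^ s.card) +
      (∑ s ∈ T.filter (fun s => ¬ s.Nonempty), (-1 : ℤ) ^ s.card) :=
    (Finset.sum_filter_add_sum_filter_not _ _ _).symm
  have hsum1 : (∑ s ∈ T.filter (fun s => s.Nonempty), (-1 : ℤ) ^ s.card) = -1 := by
    have : (∑ s ∈ T.filter (fun s => s.Nonempty), (-1 : ℤ) ^ s.card) = - chi G W := by
      rw [chi, ← Finset.sum_neg_distrib]
      refine Finset.sum_congr ?_ (fun s _ => by ring)
      ext s
      simp only [hT, Finset.mem_filter, Finset.mem_powerset]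
      tauto
    rw [this, hW]
  have h2 : T.filter (fun s => ¬ s.Nonempty) = {∅} := by
    ext s
    simp only [hT, Finset.mem_filter, Finset.mem_powerset, Finset.mem_singleton,
      Finset.not_nonempty_iff_eq_empty]
    constructor
    · tauto
    · rintro rfl
      refine ⟨⟨Finset.empty_subset _, Finset.empty_subset _, ?_⟩, rfl⟩
      simp [SimpleGraph.IsClique]
  rw [hTsplit, hsum1, h2]
  simp

end parts

open Classical Finset in
/-- If `G'` is obtained from `G` by a cone extension over an induced subgraph with
Euler characteristic `1`, then `χ(G') = χ(G)`. -/
theorem chi_coneExt {V : Type*} [Fintype V] (G : SimpleGraph V) (W : Finset V)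
    (hW : chi G W = 1) :
    chi (coneExt G W) Finset.univ = chi G Finset.univ := by
  classical
  rw [chi, ← Finset.sum_filter_add_sum_filter_not _ (fun t : Finset (Option V) => none ∈ t)]
  rw [part_cone G W hW _ (fun t => by
        simp only [Finset.mem_filter, Finset.mem_powerset, Finset.subset_univ, true_and]
        tauto),
      part_old G W _ (fun t => by
        simp only [Finset.mem_filter, Finset.mem_powerset, Finset.subset_univ, true_and]
        tauto),
      zero_add]
end

section
/- Every Ivashchenko-contractible finite simple graph has Euler characteristic 1. -/
-- Ivashchenko contractibility of the induced subgraph of `G` on the vertex set `A`: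
-- a single vertex is contractible; adding a new vertex `z` whose neighbors inside `A`
-- form a contractible set `W` (a cone extension) preserves contractibility; and removing
-- a vertex `z` whose unit sphere is contractible preserves contractibility.
open Classical in
inductive IsContractible {V : Type*} (G : SimpleGraph V) : Finset V → Prop
  | single (x : V) : IsContractible G {x}
  | cone (A W : Finset V) (z : V) (hW : W ⊆ A) (hz : z ∉ A)
      (hadj : ∀ y ∈ A, (G.Adj z y ↔ y ∈ W))
      (hA : IsContractible G A) (hWc : IsContractible G W) :
      IsContractible G (insert z A)
  | remove (A : Finset V) (z : V) (hz : z ∈ A)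
      (hs : IsContractible G ((A.erase z).filter (fun y => G.Adj z y)))
      (hA : IsContractible G A) : IsContractible G (A.erase z)

open Finset

open Classical in
lemma chi_insert {V : Type*} [Fintype V] (G : SimpleGraph V) (B W : Finset V) (z : V)
    (hz : z ∉ B) (hWB : W ⊆ B) (hadj : ∀ y ∈ B, G.Adj z y ↔ y ∈ W) :
    chi G (insert z B) = chi G B + 1 - chi G W := by
  classical
  set f : Finset V → ℤ := fun s => (-1 : ℤ) ^ (s.card + 1) with hf
  set S := Finset.univ.powerset.filter
      (fun s : Finset V => s.Nonempty ∧ s ⊆ insert z B ∧ G.IsClique ↑s) with hS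
  have hsplit : chi G (insert z B) =
      (∑ s ∈ S.filter (fun s => z ∈ s), f s) + ∑ s ∈ S.filter (fun s => z ∉ s), f s := by
    rw [chi, ← Finset.sum_filter_add_sum_filter_not S (fun s => z ∈ s) f]
  -- second sum: cliques in B
  have h2 : S.filter (fun s => z ∉ s) = Finset.univ.powerset.filter
      (fun s : Finset V => s.Nonempty ∧ s ⊆ B ∧ G.IsClique ↑s) := by
    ext s
    simp only [hS, mem_filter, mem_powerset, subset_univ, true_and]
    constructor
    · rintro ⟨⟨hne, hsub, hcl⟩, hzs⟩
      refine ⟨hne, fun y hy => ?_, hcl⟩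
      rcases Finset.mem_insert.mp (hsub hy) with rfl | h
      · exact absurd hy hzs
      · exact h
    · rintro ⟨hne, hsub, hcl⟩
      exact ⟨⟨hne, hsub.trans (Finset.subset_insert _ _), hcl⟩, fun hzs => hz (hsub hzs)⟩
  -- first sum via bijection s ↦ s.erase z onto cliques (incl. empty) inside W
  set T := Finset.univ.powerset.filter (fun t : Finset V => t ⊆ W ∧ G.IsClique ↑t) with hT
  have hzW : z ∉ W := fun h => hz (hWB h)
  have h1 : ∑ s ∈ S.filter (fun s => z ∈ s), f s = ∑ t ∈ T, (-1 : ℤ) ^ (t.card + 2) := by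
    refine Finset.sum_nbij' (fun s => s.erase z) (fun t => insert z t) ?_ ?_ ?_ ?_ ?_
    · intro s hs
      simp only [hS, mem_filter, mem_powerset, subset_univ, true_and] at hs
      obtain ⟨⟨hne, hsub, hcl⟩, hzs⟩ := hs
      simp only [hT, mem_filter, mem_powerset, subset_univ, true_and]
      constructor
      · intro y hy
        have hyB : y ∈ B := by
          rcases Finset.mem_insert.mp (hsub (Finset.mem_of_mem_erase hy)) with rfl | h
          · exact absurd rfl (Finset.ne_of_mem_erase hy)
          · exact h
        have : G.Adj z y := hcl (by simpa using hzs) (by simpa using Finset.mem_of_mem_erase hy)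
          (Ne.symm (Finset.ne_of_mem_erase hy))
        exact (hadj y hyB).mp this
      · exact hcl.subset (by simp [Finset.coe_erase, Set.diff_subset])
    · intro t ht
      simp only [hT, mem_filter, mem_powerset, subset_univ, true_and] at ht
      obtain ⟨htW, hcl⟩ := ht
      simp only [hS, mem_filter, mem_powerset, subset_univ, true_and]
      refine ⟨⟨Finset.insert_nonempty _ _, ?_, ?_⟩, Finset.mem_insert_self _ _⟩
      · exact Finset.insert_subset_insert _ (htW.trans hWB)
      · rw [Finset.coe_insert]
        rw [SimpleGraph.isClique_insert]
        refine ⟨hcl, fun y hy _ => ?_⟩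
        exact (hadj y (hWB (htW (by simpa using hy)))).mpr (htW (by simpa using hy))
    · intro s hs
      simp only [hS, mem_filter] at hs
      exact Finset.insert_erase hs.2
    · intro t ht
      simp only [hT, mem_filter, mem_powerset, subset_univ, true_and] at ht
      exact Finset.erase_insert (fun h => hzW (ht.1 h))
    · intro s hs
      simp only [hS, mem_filter] at hs
      rw [hf]
      simp only [Finset.card_erase_of_mem hs.2]
      have hpos : 0 < s.card := Finset.card_pos.mpr hs.1.2.1
      rw [show s.card - 1 + 2 = s.card + 1 by omega]
  -- sum over T, split off empty set
  have hempty : ∅ ∈ T := by simp [hT]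
  have h3 : ∑ t ∈ T, (-1 : ℤ) ^ (t.card + 2) = 1 - chi G W := by
    rw [← Finset.add_sum_erase T _ hempty]
    have herase : T.erase ∅ = Finset.univ.powerset.filter
        (fun t : Finset V => t.Nonempty ∧ t ⊆ W ∧ G.IsClique ↑t) := by
      ext t
      simp only [hT, Finset.mem_erase, mem_filter, mem_powerset, subset_univ, true_and]
      constructor
      · rintro ⟨hne, htW, hcl⟩
        exact ⟨Finset.nonempty_iff_ne_empty.mpr hne, htW, hcl⟩
      · rintro ⟨hne, htW, hcl⟩
        exact ⟨Finset.nonempty_iff_ne_empty.mp hne, htW, hcl⟩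
    have hsum : ∑ t ∈ T.erase ∅, (-1 : ℤ) ^ (t.card + 2) = - chi G W := by
      rw [herase, chi, ← Finset.sum_neg_distrib]
      exact Finset.sum_congr rfl (fun t _ => by ring)
    rw [hsum]
    norm_num
    linarith
  rw [hsplit, h1, h2, h3, ← chi]
  ring

open Classical in
lemma chi_singleton {V : Type*} [Fintype V] (G : SimpleGraph V) (x : V) :
    chi G {x} = 1 := by
  unfold chi
  have h : Finset.univ.powerset.filter
      (fun s : Finset V => s.Nonempty ∧ s ⊆ ({x} : Finset V) ∧ G.IsClique ↑s) = {{x}} := by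
    ext s
    simp only [mem_filter, mem_powerset, subset_univ, true_and, mem_singleton,
      Finset.subset_singleton_iff]
    constructor
    · rintro ⟨hne, (rfl | rfl), _⟩
      · exact absurd hne (by simp)
      · rfl
    · rintro rfl
      exact ⟨singleton_nonempty x, Or.inr rfl, by simp⟩
  rw [h]
  simp

/-- Every Ivashchenko-contractible graph has Euler characteristic `1`. -/
theorem chi_of_contractible {V : Type*} [Fintype V] (G : SimpleGraph V) (A : Finset V)
    (h : IsContractible G A) : chi G A = 1 := by
  classical
  induction h with
  | single x => exact chi_singleton G x
  | cone A W z hW hz hadj hA hWc ihA ihW =>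
      rw [chi_insert G A W z hz hW hadj, ihA, ihW]; ring
  | remove A z hzA hs hA ihs ihA =>
      have hzB : z ∉ A.erase z := Finset.notMem_erase z A
      have hins : insert z (A.erase z) = A := Finset.insert_erase hzA
      set W := (A.erase z).filter (fun y => G.Adj z y) with hWdef
      have hWB : W ⊆ A.erase z := Finset.filter_subset _ _
      have hadj : ∀ y ∈ A.erase z, (G.Adj z y ↔ y ∈ W) := by
        intro y hy
        simp [hWdef, Finset.mem_filter, hy]
      have key := chi_insert G (A.erase z) W z hzB hWB hadj
      rw [hins, ihA, ihs] at key
      linarith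
end

section
/- A finite simple graph is triangle-free if and only if every unit sphere S(x) is edgeless; consequently a graph with at least one edge is triangle-free iff its inductive dimension equals the fraction of non-isolated vertices, i.e., dim(G) = |{x : deg(x) ≥ 1}|/|V|. -/
-- Inductive dimension of the subgraph of `G` induced on the finite vertex set `A`:
-- `dim ∅ = -1`, `dim A = 1 + (1/|A|) ∑_{x ∈ A} dim (S(x))`, where `S(x)` is the
-- unit sphere of `x` inside `A` (the neighbors of `x` lying in `A`).
open Classical in
noncomputable def gdim {V : Type*} (G : SimpleGraph V) (A : Finset V) : ℚ :=
  if A = ∅ then -1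
  else 1 + (A.card : ℚ)⁻¹ * ∑ x ∈ A.attach, gdim G (A.filter (fun y => G.Adj x.1 y))
  termination_by A.card
  decreasing_by
    exact Finset.card_lt_card
      ((Finset.ssubset_iff_of_subset (Finset.filter_subset _ _)).mpr ⟨x.1, x.2, by simp⟩)

open Classical in
lemma gdim_nonneg {V : Type*} (G : SimpleGraph V) (A : Finset V) (hA : A ≠ ∅) :
    0 ≤ gdim G A := by
  rw [gdim, if_neg hA]
  have hc : (0:ℚ) < A.card := by
    exact_mod_cast Finset.card_pos.mpr (Finset.nonempty_iff_ne_empty.mpr hA)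
  have hb : ∀ x ∈ A.attach, (-1:ℚ) ≤ gdim G (A.filter (fun y => G.Adj x.1 y)) := by
    intro x _
    by_cases h : A.filter (fun y => G.Adj x.1 y) = ∅
    · rw [gdim, if_pos h]
    · have := gdim_nonneg G _ h
      linarith
  have hsum : -(A.card:ℚ) ≤ ∑ x ∈ A.attach, gdim G (A.filter (fun y => G.Adj x.1 y)) := by
    have := Finset.card_nsmul_le_sum A.attach _ (-1:ℚ) hb
    simpa [Finset.card_attach, nsmul_eq_mul] using this
  have h1 := mul_le_mul_of_nonneg_left hsum (le_of_lt (inv_pos.mpr hc))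
  rw [mul_neg, inv_mul_cancel₀ (ne_of_gt hc)] at h1
  linarith
termination_by A.card
decreasing_by
  exact Finset.card_lt_card
    ((Finset.ssubset_iff_of_subset (Finset.filter_subset _ _)).mpr ⟨x.1, x.2, by simp⟩)

open Classical in
lemma gdim_bounds {V : Type*} (G : SimpleGraph V) (A : Finset V) :
    (-1:ℚ) ≤ gdim G A := by
  by_cases h : A = ∅
  · rw [gdim, if_pos h]
  · have := gdim_nonneg G A h; linarith

open Classical in
lemma gdim_pos {V : Type*} (G : SimpleGraph V) (A : Finset V) {x y : V}
    (hx : x ∈ A) (hy : y ∈ A) (hxy : G.Adj x y) : 0 < gdim G A := by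
  have hA : A ≠ ∅ := Finset.nonempty_iff_ne_empty.mp ⟨x, hx⟩
  rw [gdim, if_neg hA]
  have hc : (0:ℚ) < A.card := by
    exact_mod_cast Finset.card_pos.mpr (Finset.nonempty_iff_ne_empty.mpr hA)
  have key : ∑ _i ∈ A.attach, (-1:ℚ) <
      ∑ i ∈ A.attach, gdim G (A.filter (fun z => G.Adj i.1 z)) := by
    apply Finset.sum_lt_sum
    · intro i _
      exact gdim_bounds G _
    · refine ⟨⟨x, hx⟩, Finset.mem_attach _ _, ?_⟩
      have hne : A.filter (fun z => G.Adj x z) ≠ ∅ := by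
        apply Finset.nonempty_iff_ne_empty.mp
        exact ⟨y, Finset.mem_filter.mpr ⟨hy, hxy⟩⟩
      have := gdim_nonneg G _ hne
      linarith
  have hsum : -(A.card:ℚ) < ∑ i ∈ A.attach, gdim G (A.filter (fun z => G.Adj i.1 z)) := by
    simpa [Finset.sum_const, Finset.card_attach, nsmul_eq_mul, mul_neg] using key
  have h1 := mul_lt_mul_of_pos_left hsum (inv_pos.mpr hc)
  rw [mul_neg, inv_mul_cancel₀ (ne_of_gt hc)] at h1
  linarith

open Classical in
lemma gdim_sphere {V : Type*} [Fintype V] (G : SimpleGraph V)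
    (htf : ∀ x y z : V, G.Adj x y → G.Adj x z → ¬ G.Adj y z) (x : V) :
    gdim G (Finset.univ.filter (fun y => G.Adj x y)) =
      if Finset.univ.filter (fun y => G.Adj x y) = ∅ then -1 else 0 := by
  set S := Finset.univ.filter (fun y => G.Adj x y) with hS
  by_cases h : S = ∅
  · rw [if_pos h, gdim, if_pos h]
  · rw [if_neg h, gdim, if_neg h]
    have hc : (0:ℚ) < S.card := by
      exact_mod_cast Finset.card_pos.mpr (Finset.nonempty_iff_ne_empty.mpr h)
    have hsum : ∀ i ∈ S.attach, gdim G (S.filter (fun z => G.Adj i.1 z)) = -1 := by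
      intro i _
      have hxi : G.Adj x i.1 := (Finset.mem_filter.mp i.2).2
      have hempty : S.filter (fun z => G.Adj i.1 z) = ∅ := by
        rw [Finset.filter_eq_empty_iff]
        intro z hz hadj
        exact htf x i.1 z hxi (Finset.mem_filter.mp hz).2 hadj
      rw [hempty, gdim, if_pos rfl]
    rw [Finset.sum_congr rfl hsum]
    rw [Finset.sum_const, Finset.card_attach, nsmul_eq_mul, mul_neg, mul_one,
      mul_neg, inv_mul_cancel₀ (ne_of_gt hc)]
    ring

open Classical in
theorem triangleFree_dim {V : Type*} [Fintype V] (G : SimpleGraph V) :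
    (G.CliqueFree 3 ↔ ∀ x y z : V, G.Adj x y → G.Adj x z → ¬ G.Adj y z) ∧
    ((∃ x y : V, G.Adj x y) →
      (G.CliqueFree 3 ↔
        gdim G Finset.univ =
          ((Finset.univ.filter (fun x : V => ∃ y, G.Adj x y)).card : ℚ) /
            (Fintype.card V : ℚ))) := by
  have part1 : G.CliqueFree 3 ↔ ∀ x y z : V, G.Adj x y → G.Adj x z → ¬ G.Adj y z := by
    constructor
    · intro h x y z hxy hxz hyz
      exact h {x, y, z} (SimpleGraph.is3Clique_triple_iff.mpr ⟨hxy, hxz, hyz⟩)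
    · intro h t ht
      obtain ⟨a, b, c, hab, hac, hbc, rfl⟩ := SimpleGraph.is3Clique_iff.mp ht
      exact h a b c hab hac hbc
  refine ⟨part1, ?_⟩
  rintro ⟨x₀, y₀, hxy₀⟩
  have hn : (0:ℚ) < Fintype.card V := by
    have : Nonempty V := ⟨x₀⟩
    exact_mod_cast Fintype.card_pos
  have hne : (Finset.univ : Finset V) ≠ ∅ := by
    apply Finset.nonempty_iff_ne_empty.mp
    exact ⟨x₀, Finset.mem_univ _⟩
  set d : ℕ := (Finset.univ.filter (fun x : V => ∃ y, G.Adj x y)).card with hd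
  have hcount : ∑ x : V,
      (if Finset.univ.filter (fun y => G.Adj x y) = ∅ then (-1:ℚ) else 0) =
      -((Fintype.card V : ℚ) - d) := by
    have hiff : ∀ x : V,
        (Finset.univ.filter (fun y => G.Adj x y) = ∅) ↔ ¬ ∃ y, G.Adj x y := by
      intro x
      simp [Finset.filter_eq_empty_iff]
    have : ∑ x : V, (if Finset.univ.filter (fun y => G.Adj x y) = ∅ then (-1:ℚ) else 0)
        = ∑ x : V, (if ¬ ∃ y, G.Adj x y then (-1:ℚ) else 0) := by
      apply Finset.sum_congr rfl
      intro x _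
      simp only [hiff x]
    rw [this, Finset.sum_ite, Finset.sum_const, Finset.sum_const, nsmul_eq_mul,
      nsmul_eq_mul, mul_neg, mul_one, mul_zero, add_zero]
    have hcard := Finset.card_filter_add_card_filter_not
      (s := (Finset.univ : Finset V)) (fun x : V => ∃ y, G.Adj x y)
    have hcard' : (Finset.univ.filter (fun x : V => ¬ ∃ y, G.Adj x y)).card
        = Fintype.card V - d := by
      rw [Finset.card_univ] at hcard; omega
    have hdle : d ≤ Fintype.card V := by
      rw [hd]; exact Finset.card_filter_le _ _
    rw [hcard']
    push_cast [Nat.cast_sub hdle]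
    ring
  constructor
  · intro hcf
    have htf := part1.mp hcf
    rw [gdim, if_neg hne]
    have hattach : ∑ x ∈ (Finset.univ : Finset V).attach,
        gdim G (Finset.univ.filter (fun y => G.Adj x.1 y))
        = ∑ x : V, gdim G (Finset.univ.filter (fun y => G.Adj x y)) := by
      rw [← Finset.sum_attach (Finset.univ : Finset V)
        (fun x => gdim G (Finset.univ.filter (fun y => G.Adj x y)))]
    rw [hattach]
    have : ∑ x : V, gdim G (Finset.univ.filter (fun y => G.Adj x y))
        = ∑ x : V, (if Finset.univ.filter (fun y => G.Adj x y) = ∅ then (-1:ℚ) else 0) := by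
      apply Finset.sum_congr rfl
      intro x _
      exact gdim_sphere G htf x
    rw [this, hcount, Finset.card_univ]
    field_simp
    ring
  · intro heq
    by_contra hncf
    obtain ⟨a, b, c, hab, hac, hbc⟩ : ∃ a b c : V, G.Adj a b ∧ G.Adj a c ∧ G.Adj b c := by
      by_contra hno
      push_neg at hno
      exact hncf (part1.mpr (fun x y z hxy hxz hyz => hno x y z hxy hxz hyz))
    -- Show gdim G univ > d / card V, contradiction
    have hgt : ((d:ℚ) / (Fintype.card V : ℚ)) < gdim G Finset.univ := by
      rw [gdim, if_neg hne]
      have key : ∑ x ∈ (Finset.univ : Finset V).attach,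
          (if Finset.univ.filter (fun y => G.Adj x.1 y) = ∅ then (-1:ℚ) else 0) <
          ∑ x ∈ (Finset.univ : Finset V).attach,
          gdim G (Finset.univ.filter (fun y => G.Adj x.1 y)) := by
        apply Finset.sum_lt_sum
        · intro i _
          by_cases h : Finset.univ.filter (fun y => G.Adj i.1 y) = ∅
          · rw [if_pos h, gdim, if_pos h]
          · rw [if_neg h]
            exact gdim_nonneg G _ h
        · refine ⟨⟨a, Finset.mem_univ a⟩, Finset.mem_attach _ _, ?_⟩
          have hbS : b ∈ Finset.univ.filter (fun y => G.Adj a y) :=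
            Finset.mem_filter.mpr ⟨Finset.mem_univ _, hab⟩
          have hcS : c ∈ Finset.univ.filter (fun y => G.Adj a y) :=
            Finset.mem_filter.mpr ⟨Finset.mem_univ _, hac⟩
          have hne' : Finset.univ.filter (fun y => G.Adj a y) ≠ ∅ :=
            Finset.nonempty_iff_ne_empty.mp ⟨b, hbS⟩
          rw [if_neg hne']
          exact gdim_pos G _ hbS hcS hbc
      have hlhs : ∑ x ∈ (Finset.univ : Finset V).attach,
          (if Finset.univ.filter (fun y => G.Adj x.1 y) = ∅ then (-1:ℚ) else 0)
          = -((Fintype.card V : ℚ) - d) := by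
        rw [← hcount]
        exact Finset.sum_attach (Finset.univ : Finset V)
          (fun x => if Finset.univ.filter (fun y => G.Adj x y) = ∅ then (-1:ℚ) else 0)
      rw [hlhs] at key
      have h1 := mul_lt_mul_of_pos_left key
        (inv_pos.mpr (by exact_mod_cast hn : (0:ℚ) < ((Finset.univ : Finset V).card : ℚ)))
      have hcards : ((Finset.univ : Finset V).card : ℚ) = (Fintype.card V : ℚ) := by
        rw [Finset.card_univ]
      rw [hcards] at h1 ⊢
      have h2 : (Fintype.card V : ℚ)⁻¹ * -((Fintype.card V : ℚ) - d)
          = (d:ℚ) / (Fintype.card V : ℚ) - 1 := by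
        field_simp
        ring
      rw [h2] at h1
      linarith
    rw [heq] at hgt
    exact lt_irrefl _ hgt
end
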